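/- Let σ, τ be involutions in S_n. Define R_σ by (R_σ)_{i,j} = (number of pairs (k,l) with k ≥ i, l ≤ j, σ(k) = l), and let R*_σ be the strictly lower-triangular part of R_σ (i.e., (R*_σ)_{i,j} = (R_σ)_{i,j} if i > j and 0 otherwise). Then (R_σ)_{i,j} ≤ (R_τ)_{i,j} for all i, j if and only if (R*_σ)_{i,j} ≤ (R*_τ)_{i,j} for all i, j. -/

import Mathlib

/-- The rank matrix of a permutation: `(R σ) i j` is the number of `k ≥ i` with `σ k ≤ j`. -/
def rankMat {n : ℕ} (σ : Equiv.Perm (Fin n)) : Matrix (Fin n) (Fin n) ℕ :=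
  fun i j => (Finset.univ.filter (fun k : Fin n => i ≤ k ∧ σ k ≤ j)).card

/-- The strictly lower-triangular part of the rank matrix. -/
def rankMatStar {n : ℕ} (σ : Equiv.Perm (Fin n)) : Matrix (Fin n) (Fin n) ℕ :=
  fun i j => if j < i then rankMat σ i j else 0

open Finset

lemma count_le {n : ℕ} (σ : Equiv.Perm (Fin n)) (j : Fin n) :
    (Finset.univ.filter (fun k : Fin n => σ k ≤ j)).card = (j : ℕ) + 1 := by
  have h1 : (Finset.univ.filter (fun k : Fin n => σ k ≤ j)).card
      = (Finset.univ.filter (fun k : Fin n => k ≤ j)).card := by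
    apply Finset.card_nbij' σ σ.symm <;> intro x hx <;> simp_all
  have h2 : Finset.univ.filter (fun k : Fin n => k ≤ j) = Finset.Iic j := by
    ext k; simp
  rw [h1, h2, Fin.card_Iic]

lemma count_lt {n : ℕ} (σ : Equiv.Perm (Fin n)) (i : Fin n) :
    (Finset.univ.filter (fun k : Fin n => σ k < i)).card = (i : ℕ) := by
  have h1 : (Finset.univ.filter (fun k : Fin n => σ k < i)).card
      = (Finset.univ.filter (fun k : Fin n => k < i)).card := by
    apply Finset.card_nbij' σ σ.symm <;> intro x hx <;> simp_all
  have h2 : Finset.univ.filter (fun k : Fin n => k < i) = Finset.Iio i := by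
    ext k; simp
  rw [h1, h2, Fin.card_Iio]

lemma key {n : ℕ} (σ : Equiv.Perm (Fin n)) (hσ : ∀ k, σ (σ k) = k) (i j : Fin n) :
    rankMat σ i j + (i : ℕ)
      = (j : ℕ) + 1 + (Finset.univ.filter (fun k : Fin n => j < k ∧ σ k < i)).card := by
  classical
  have split1 : rankMat σ i j + (Finset.univ.filter (fun k : Fin n => k < i ∧ σ k ≤ j)).card
      = (j : ℕ) + 1 := by
    rw [← count_le σ j, rankMat,
      ← Finset.card_filter_add_card_filter_not (p := fun k : Fin n => i ≤ k)
      (s := Finset.univ.filter (fun k : Fin n => σ k ≤ j)),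
      Finset.filter_filter, Finset.filter_filter]
    congr 1
    · congr 1; ext k; simp [and_comm]
    · congr 1; ext k; simp [and_comm]
  have split2 : (Finset.univ.filter (fun k : Fin n => k ≤ j ∧ σ k < i)).card
      + (Finset.univ.filter (fun k : Fin n => j < k ∧ σ k < i)).card = (i : ℕ) := by
    rw [← count_lt σ i,
      ← Finset.card_filter_add_card_filter_not (p := fun k : Fin n => k ≤ j)
      (s := Finset.univ.filter (fun k : Fin n => σ k < i)),
      Finset.filter_filter, Finset.filter_filter]
    congr 1
    · congr 1; ext k; simp [and_comm]
    · congr 1; ext k; simp [and_comm]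
  have sym : (Finset.univ.filter (fun k : Fin n => k < i ∧ σ k ≤ j)).card
      = (Finset.univ.filter (fun k : Fin n => k ≤ j ∧ σ k < i)).card := by
    apply Finset.card_nbij' σ σ <;> intro x hx <;> simp_all [hσ]
  omega

lemma tail_le {n : ℕ} (σ τ : Equiv.Perm (Fin n))
    (h : ∀ i j : Fin n, rankMatStar σ i j ≤ rankMatStar τ i j) (i j : Fin n) (hij : i ≤ j) :
    (Finset.univ.filter (fun k : Fin n => j < k ∧ σ k < i)).card
      ≤ (Finset.univ.filter (fun k : Fin n => j < k ∧ τ k < i)).card := by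
  rcases Nat.eq_zero_or_pos (i : ℕ) with h0 | h0
  · have : ∀ (ρ : Equiv.Perm (Fin n)),
        Finset.univ.filter (fun k : Fin n => j < k ∧ ρ k < i) = ∅ := by
      intro ρ; apply Finset.filter_false_of_mem; intro k _
      rintro ⟨-, hk⟩; omega
    simp [this]
  · by_cases hjn : (j : ℕ) + 1 < n
    · set j' : Fin n := ⟨(j : ℕ) + 1, hjn⟩ with hj'
      set i' : Fin n := ⟨(i : ℕ) - 1, by omega⟩ with hi'
      have hρ : ∀ (ρ : Equiv.Perm (Fin n)),
          Finset.univ.filter (fun k : Fin n => j < k ∧ ρ k < i)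
            = Finset.univ.filter (fun k : Fin n => j' ≤ k ∧ ρ k ≤ i') := by
        intro ρ; apply Finset.filter_congr; intro k _
        simp only [Fin.lt_def, Fin.le_def, hi', hj']
        omega
      have h' := h j' i'
      have hlt : i' < j' := by simp only [Fin.lt_def, hi', hj']; omega
      simp only [rankMatStar, if_pos hlt] at h'
      rw [hρ σ, hρ τ]
      exact h'
    · have : ∀ (ρ : Equiv.Perm (Fin n)),
          Finset.univ.filter (fun k : Fin n => j < k ∧ ρ k < i) = ∅ := by
        intro ρ; apply Finset.filter_false_of_mem; intro k _
        rintro ⟨hk, -⟩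
        have := k.isLt
        simp only [Fin.lt_def] at hk
        omega
      simp [this]

theorem stmt2 (n : ℕ) (σ τ : Equiv.Perm (Fin n))
    (hσ : σ * σ = 1) (hτ : τ * τ = 1) :
    (∀ i j : Fin n, rankMat σ i j ≤ rankMat τ i j) ↔
      (∀ i j : Fin n, rankMatStar σ i j ≤ rankMatStar τ i j) := by
  have hσ' : ∀ k, σ (σ k) = k := fun k => by
    rw [← Equiv.Perm.mul_apply, hσ]; rfl
  have hτ' : ∀ k, τ (τ k) = k := fun k => by
    rw [← Equiv.Perm.mul_apply, hτ]; rfl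
  constructor
  · intro h i j
    unfold rankMatStar
    split_ifs with hji
    · exact h i j
    · exact le_rfl
  · intro h i j
    by_cases hji : j < i
    · have := h i j
      simpa [rankMatStar, hji] using this
    · have hij : i ≤ j := not_lt.mp hji
      have k1 := key σ hσ' i j
      have k2 := key τ hτ' i j
      have := tail_le σ τ h i j hij
      omega
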